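/- arXiv:2105.10177 — 7 statements merged into one kernel-verified Lean document; each statement's English description precedes it below -/
import Mathlib

section
/- For any g, h in the upper half-plane H, define γ(g,h) = |g-h|²/(Im g · Im h). Then |g - h|² ≤ |h|²(4γ(g,h)² + 2γ(g,h)). -/
/-- Hyperbolic semi-metric functional on the upper half-plane. -/
noncomputable def gam (g h : ℂ) : ℝ := ‖g - h‖ ^ 2 / (g.im * h.im)

lemma aux0 (a b D H2 : ℝ) (ha : 0 < a) (hb : 0 < b) (hD : 0 ≤ D)
    (h1 : (a - b) ^ 2 ≤ D) (h2 : b ^ 2 ≤ H2) :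
    D * (a * b) ^ 2 ≤ H2 * (4 * D ^ 2 + 2 * D * (a * b)) := by
  have step1 : D * (a * b) ^ 2 ≤ b ^ 2 * (4 * D ^ 2 + 2 * D * (a * b)) := by
    nlinarith [mul_nonneg (mul_nonneg hD (sq_nonneg b)) (sub_nonneg.mpr h1),
      mul_nonneg (mul_nonneg hD (sq_nonneg b)) (sq_nonneg (a - b)),
      mul_nonneg (mul_nonneg hD (sq_nonneg b)) (sq_nonneg b)]
  have hpos : 0 ≤ 4 * D ^ 2 + 2 * D * (a * b) := by positivity
  calc D * (a * b) ^ 2 ≤ b ^ 2 * (4 * D ^ 2 + 2 * D * (a * b)) := step1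
    _ ≤ H2 * (4 * D ^ 2 + 2 * D * (a * b)) := mul_le_mul_of_nonneg_right h2 hpos

theorem stmt0 (g h : ℂ) (hg : 0 < g.im) (hh : 0 < h.im) :
    ‖g - h‖ ^ 2 ≤
      ‖h‖ ^ 2 * (4 * gam g h ^ 2 + 2 * gam g h) := by
  have hab : 0 < g.im * h.im := mul_pos hg hh
  have h1 : (g.im - h.im) ^ 2 ≤ ‖g - h‖ ^ 2 := by
    have h0 : |(g - h).im| ≤ ‖g - h‖ := Complex.abs_im_le_norm _
    have := sq_abs ((g - h).im)
    nlinarith [abs_nonneg ((g - h).im), Complex.sub_im g h]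
  have h2 : h.im ^ 2 ≤ ‖h‖ ^ 2 := by
    have h0 : |h.im| ≤ ‖h‖ := Complex.abs_im_le_norm _
    nlinarith [abs_nonneg h.im, sq_abs h.im]
  have hD : 0 ≤ ‖g - h‖ ^ 2 := by positivity
  rw [gam, div_pow, ← sub_nonneg]
  have key : ‖h‖ ^ 2 *
      (4 * ((‖g - h‖ ^ 2) ^ 2 / (g.im * h.im) ^ 2) +
        2 * (‖g - h‖ ^ 2 / (g.im * h.im))) - ‖g - h‖ ^ 2 =
      (‖h‖ ^ 2 * (4 * (‖g - h‖ ^ 2) ^ 2 + 2 * ‖g - h‖ ^ 2 * (g.im * h.im)) -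
        ‖g - h‖ ^ 2 * (g.im * h.im) ^ 2) / (g.im * h.im) ^ 2 := by
    field_simp
  rw [key]
  apply div_nonneg _ (by positivity)
  nlinarith [aux0 g.im h.im (‖g - h‖ ^ 2) (‖h‖ ^ 2) hg hh hD h1 h2]
end

section
/- For any g, h in the upper half-plane H, |g| ≤ 4γ(g,h)·Im h + 2|h|, where γ(g,h) = |g-h|²/(Im g · Im h). -/
theorem stmt2 (g h : ℂ) (hg : 0 < g.im) (hh : 0 < h.im) :
    ‖g‖ ≤ 4 * gam g h * h.im + 2 * ‖h‖ := by
  have h1 : gam g h * h.im = ‖g - h‖ ^ 2 / g.im := by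
    rw [gam, div_mul_eq_mul_div, div_eq_div_iff (mul_pos hg hh).ne' hg.ne']
    ring
  have him : g.im ≤ ‖g‖ := Complex.im_le_norm g
  have htri : ‖g‖ ≤ ‖g - h‖ + ‖h‖ := by
    calc ‖g‖ = ‖(g - h) + h‖ := by ring_nf
    _ ≤ _ := norm_add_le _ _
  rw [mul_assoc, h1]
  rcases le_or_gt (‖g‖) (2 * ‖h‖) with hc | hc
  · have : 0 ≤ ‖g - h‖ ^ 2 / g.im :=
      div_nonneg (sq_nonneg _) hg.le
    linarith
  · have hge : ‖g‖ ≤ 2 * ‖g - h‖ := by linarith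
    have key : ‖g‖ * g.im ≤ 4 * ‖g - h‖ ^ 2 := by
      nlinarith [norm_nonneg g, norm_nonneg (g - h)]
    have : ‖g‖ ≤ 4 * (‖g - h‖ ^ 2 / g.im) := by
      rw [← mul_div_assoc, le_div_iff₀ hg]
      linarith
    have hb : 0 ≤ ‖h‖ := norm_nonneg h
    linarith
end

section
/- Let z ∈ H and let Γ = Γ(z) ∈ H satisfy Γ = -(z+Γ)⁻¹. Then for any h ∈ H, γ(-(z+h)⁻¹, Γ) ≤ γ(h, Γ), where γ(g,h) = |g-h|²/(Im g · Im h). -/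
theorem stmt3 (z Γ h : ℂ) (hz : 0 < z.im) (hΓ : 0 < Γ.im) (hh : 0 < h.im)
    (hfix : Γ = -(z + Γ)⁻¹) :
    gam (-(z + h)⁻¹) Γ ≤ gam h Γ := by
  have hw : (z + h) ≠ 0 := by
    intro e
    have := congrArg Complex.im e
    simp [Complex.add_im] at this
    linarith
  have hu : (z + Γ) ≠ 0 := by
    intro e
    have := congrArg Complex.im e
    simp [Complex.add_im] at this
    linarith
  have key : -(z + h)⁻¹ - Γ = (h - Γ) / ((z + h) * (z + Γ)) := by
    nth_rewrite 1 [hfix]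
    field_simp
    ring
  have habs : ‖-(z + h)⁻¹ - Γ‖ ^ 2 =
      ‖h - Γ‖ ^ 2 / (Complex.normSq (z + h) * Complex.normSq (z + Γ)) := by
    rw [key, norm_div, norm_mul, div_pow, mul_pow]
    simp [Complex.sq_norm]
  have him : (-(z + h)⁻¹).im = (z.im + h.im) / Complex.normSq (z + h) := by
    simp [Complex.inv_im, Complex.add_im, neg_div]
    ring
  have hfixim : Complex.normSq (z + Γ) * Γ.im = z.im + Γ.im := by
    have h1 := congrArg Complex.im hfix
    simp [Complex.inv_im, Complex.add_im, neg_div] at h1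
    have hb : (0:ℝ) < Complex.normSq (z + Γ) := by rw [Complex.normSq_pos]; exact hu
    field_simp at h1
    linarith
  have ha : 0 < Complex.normSq (z + h) := by
    rw [Complex.normSq_pos]; exact hw
  have hb : 0 < Complex.normSq (z + Γ) := by
    rw [Complex.normSq_pos]; exact hu
  set a := Complex.normSq (z + h) with ha_def
  set b := Complex.normSq (z + Γ) with hb_def
  set d := ‖h - Γ‖ ^ 2 with hd_def
  have hd : 0 ≤ d := by positivity
  unfold gam
  rw [habs, him]
  have hL : d / (a * b) / ((z.im + h.im) / a * Γ.im) = d / (b * (z.im + h.im) * Γ.im) := by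
    field_simp
  rw [hL]
  have hzh : 0 < z.im + h.im := by linarith
  apply div_le_div_of_nonneg_left hd (by positivity)
  nlinarith [mul_pos hb hzh, mul_pos hz hΓ]
end

section
/- Fix Γ ∈ H and write γ(h) = |h-Γ|²/(Im h · Im Γ). For any n ≥ 1 and h₁,...,hₙ ∈ H, γ((1/n)∑ᵢ hᵢ) = (1/n) ∑_{i,j} cos(α_{ij}) √(qᵢ γ(hᵢ)) √(qⱼ γ(hⱼ)), where qᵢ = Im hᵢ / ∑ⱼ Im hⱼ and α_{ij} = arg((hᵢ - Γ)·conj(hⱼ - Γ)) (with the convention arg 0 = π/2). -/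
/-- The angle `arg ((a-Γ) * conj (b-Γ))`, with the convention `arg 0 = π/2`. -/
noncomputable def angleArg (Γ a b : ℂ) : ℝ :=
  if (a - Γ) * (starRingEnd ℂ) (b - Γ) = 0 then Real.pi / 2
  else Complex.arg ((a - Γ) * (starRingEnd ℂ) (b - Γ))

theorem stmt4 (n : ℕ) (hn : 1 ≤ n) (Γ : ℂ) (hΓ : 0 < Γ.im)
    (h : Fin n → ℂ) (hh : ∀ i, 0 < (h i).im) :
    gam ((1 / (n : ℂ)) * ∑ i, h i) Γ =
      (1 / (n : ℝ)) * ∑ i, ∑ j,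
        Real.cos (angleArg Γ (h i) (h j)) *
          Real.sqrt (((h i).im / ∑ k, (h k).im) * gam (h i) Γ) *
          Real.sqrt (((h j).im / ∑ k, (h k).im) * gam (h j) Γ) := by
  have hnR : (0:ℝ) < (n:ℝ) := by exact_mod_cast Nat.lt_of_lt_of_le Nat.zero_lt_one hn
  haveI : NeZero n := ⟨by omega⟩
  set S : ℝ := ∑ k, (h k).im with hS
  have hSpos : 0 < S := Finset.sum_pos (fun i _ => hh i) Finset.univ_nonempty
  set A : Fin n → ℂ := fun i => h i - Γ with hA
  set c : ℝ := S * Γ.im with hc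
  have hcpos : 0 < c := mul_pos hSpos hΓ
  have key : ∀ i j : Fin n, Real.cos (angleArg Γ (h i) (h j)) *
          Real.sqrt (((h i).im / S) * gam (h i) Γ) *
          Real.sqrt (((h j).im / S) * gam (h j) Γ)
      = ((A i) * (starRingEnd ℂ) (A j)).re / c := by
    intro i j
    have hq : ∀ k, ((h k).im / S) * gam (h k) Γ = (‖A k‖)^2 / c := by
      intro k
      unfold gam
      rw [hc, hA]
      field_simp [(hh k).ne', hΓ.ne', hSpos.ne']
    have hsq : ∀ k, Real.sqrt (((h k).im / S) * gam (h k) Γ)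
        = ‖A k‖ / Real.sqrt c := by
      intro k
      rw [hq k, Real.sqrt_div (by positivity), Real.sqrt_sq (norm_nonneg _)]
    rw [hsq i, hsq j]
    have hsc : Real.sqrt c * Real.sqrt c = c := Real.mul_self_sqrt hcpos.le
    set z := (A i) * (starRingEnd ℂ) (A j) with hz
    by_cases hz0 : z = 0
    · have h00 : A i = 0 ∨ A j = 0 := by
        have := mul_eq_zero.mp (hz ▸ hz0)
        simpa [map_eq_zero] using this
      rw [hz0]
      simp only [Complex.zero_re, zero_div]
      rcases h00 with h0 | h0 <;> rw [h0] <;> simp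
    · have habs : ‖z‖ = ‖A i‖ * ‖A j‖ := by
        rw [hz, norm_mul, Complex.norm_conj]
      have hcos : Real.cos (angleArg Γ (h i) (h j)) = z.re / ‖z‖ := by
        unfold angleArg
        rw [hA] at hz
        simp only [← hz, if_neg hz0]
        exact Complex.cos_arg hz0
      have hne : ‖A i‖ * ‖A j‖ ≠ 0 := by
        rw [← habs]; simpa using hz0
      rw [hcos, habs]
      calc z.re / (‖A i‖ * ‖A j‖) * (‖A i‖ / Real.sqrt c)
            * (‖A j‖ / Real.sqrt c)
          = z.re / (‖A i‖ * ‖A j‖)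
            * (‖A i‖ * ‖A j‖) / (Real.sqrt c * Real.sqrt c) := by ring
        _ = z.re / (Real.sqrt c * Real.sqrt c) := by rw [div_mul_cancel₀ _ hne]
        _ = z.re / c := by rw [hsc]
  simp only [key]
  -- sum of re / c
  have hsum : ((∑ i, A i) * (starRingEnd ℂ) (∑ j, A j)).re / c
      = ∑ i, ∑ j, ((A i) * (starRingEnd ℂ) (A j)).re / c := by
    rw [map_sum, Finset.sum_mul_sum, Complex.re_sum, Finset.sum_div]
    exact Finset.sum_congr rfl fun i _ => by rw [Complex.re_sum, Finset.sum_div]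
  rw [← hsum]
  set T : ℂ := ∑ i, A i with hT
  have hTre : (T * (starRingEnd ℂ) T).re = (‖T‖)^2 := by
    rw [Complex.mul_conj]
    simp [Complex.sq_norm]
  rw [hTre]
  -- LHS
  have hnC : (n : ℂ) ≠ 0 := Nat.cast_ne_zero.mpr (by omega)
  have hM : (1 / (n : ℂ)) * ∑ i, h i - Γ = (1 / (n : ℂ)) * T := by
    rw [hT, hA, Finset.sum_sub_distrib, Finset.sum_const, Finset.card_univ,
      Fintype.card_fin, nsmul_eq_mul, mul_sub]
    congr 1
    field_simp
  have hIm : ((1 / (n : ℂ)) * ∑ i, h i).im = S / n := by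
    have : (1 / (n : ℂ)) = ((1 / (n : ℝ) : ℝ) : ℂ) := by push_cast; ring
    rw [this, Complex.im_ofReal_mul, Complex.im_sum, hS]
    ring
  unfold gam
  rw [hM, hIm, norm_mul]
  have habs1n : ‖(1 / (n : ℂ))‖ = 1 / (n : ℝ) := by
    rw [norm_div, norm_one, Complex.norm_natCast]
  rw [habs1n]
  rw [hc]
  field_simp
end

section
/- Fix Γ ∈ H and write γ(h) = |h-Γ|²/(Im h · Im Γ). Then γ is convex on H: for any n ≥ 1 and h₁,...,hₙ ∈ H, γ((1/n)∑ᵢ hᵢ) ≤ (1/n) ∑ᵢ γ(hᵢ). -/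
theorem stmt5 (n : ℕ) (hn : 1 ≤ n) (Γ : ℂ) (hΓ : 0 < Γ.im)
    (h : Fin n → ℂ) (hh : ∀ i, 0 < (h i).im) :
    gam ((1 / (n : ℂ)) * ∑ i, h i) Γ ≤ (1 / (n : ℝ)) * ∑ i, gam (h i) Γ := by
  have hN : (0:ℝ) < n := by exact_mod_cast hn
  set b := Γ.im with hb
  set Y : ℝ := ∑ i, (h i).im with hY
  set A : ℂ := ∑ i, (h i - Γ) with hA
  have hYpos : 0 < Y := Finset.sum_pos (fun i _ => hh i) ⟨⟨0, hn⟩, Finset.mem_univ _⟩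
  -- rewrite LHS
  have him : ((1 / (n : ℂ)) * ∑ i, h i).im = (1/(n:ℝ)) * Y := by
    simp [Complex.mul_im, Complex.im_sum, hY, one_div,
      Complex.inv_im, Complex.inv_re, Complex.normSq_natCast]
  have hdiff : (1 / (n : ℂ)) * ∑ i, h i - Γ = (1 / (n : ℂ)) * A := by
    rw [hA, Finset.sum_sub_distrib]
    have hn0 : (n:ℂ) ≠ 0 := by exact_mod_cast hN.ne'
    field_simp
    simp [Finset.sum_const, nsmul_eq_mul]
  have habs : ‖(1 / (n : ℂ)) * ∑ i, h i - Γ‖ = (1/(n:ℝ)) * ‖A‖ := by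
    rw [hdiff, norm_mul]
    congr 1
    simp [Complex.norm_natCast]
  have hLHS : gam ((1 / (n : ℂ)) * ∑ i, h i) Γ
      = (1/(n:ℝ)) * (‖A‖ ^ 2 / (Y * b)) := by
    rw [gam, habs, him, ← hb]
    field_simp
  rw [hLHS]
  apply mul_le_mul_of_nonneg_left _ (by positivity)
  -- key inequality
  have tri : ‖A‖ ≤ ∑ i, ‖h i - Γ‖ := by
    rw [hA]; exact norm_sum_le _ _
  have h1 : ‖A‖ ^ 2 ≤ (∑ i, ‖h i - Γ‖) ^ 2 := by
    apply pow_le_pow_left₀ (by positivity) tri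
  have h2 : (∑ i, ‖h i - Γ‖) ^ 2 / Y ≤ ∑ i, ‖h i - Γ‖ ^ 2 / (h i).im := by
    rw [hY]
    exact Finset.sq_sum_div_le_sum_sq_div _ _ (fun i _ => hh i)
  calc ‖A‖ ^ 2 / (Y * b)
      ≤ (∑ i, ‖h i - Γ‖) ^ 2 / (Y * b) := by
        gcongr
    _ = ((∑ i, ‖h i - Γ‖) ^ 2 / Y) / b := by rw [div_div]
    _ ≤ (∑ i, ‖h i - Γ‖ ^ 2 / (h i).im) / b := by
        gcongr
    _ = ∑ i, gam (h i) Γ := by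
        rw [Finset.sum_div]
        exact Finset.sum_congr rfl fun i _ => by rw [gam, div_div]
end

section
/- Let N be an ℕ-valued random variable with mean d > 1 and let π_e be the extinction probability of a Galton-Watson branching process with offspring distribution the law of N, i.e. π_e is the smallest fixed point in [0,1] of the generating function φ(x) = E[x^N]. Then π_e ≤ 2·P(N ≤ 1). -/
open MeasureTheory

theorem stmt6 {Ω : Type*} [MeasurableSpace Ω] (P : Measure Ω) [IsProbabilityMeasure P]
    (N : Ω → ℕ) (hN : Measurable N)
    (hInt : Integrable (fun ω => (N ω : ℝ)) P)
    (hd : 1 < ∫ ω, (N ω : ℝ) ∂P) :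
    sInf {x : ℝ | x ∈ Set.Icc (0 : ℝ) 1 ∧ (∫ ω, x ^ N ω ∂P) = x}
      ≤ 2 * (P {ω | N ω ≤ 1}).toReal := by
  set φ : ℝ → ℝ := fun x => ∫ ω, x ^ N ω ∂P with hφdef
  set p : ℝ := (P {ω | N ω ≤ 1}).toReal with hpdef
  have hp0 : 0 ≤ p := ENNReal.toReal_nonneg
  have hp1 : p ≤ 1 := by
    rw [hpdef]
    exact ENNReal.toReal_le_of_le_ofReal one_pos.le (by simpa using prob_le_one)
  have hmeasA : MeasurableSet {ω | N ω ≤ 1} := hN measurableSet_Iic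
  have hmeas : ∀ x : ℝ, Measurable fun ω => x ^ N ω := fun x =>
    (measurable_from_nat (f := fun n : ℕ => x ^ n)).comp hN
  have hint : ∀ x ∈ Set.Icc (0 : ℝ) 1, Integrable (fun ω => x ^ N ω) P := by
    intro x hx
    refine (integrable_const (1 : ℝ)).mono' (hmeas x).aestronglyMeasurable ?_
    filter_upwards with ω
    rw [Real.norm_eq_abs, abs_of_nonneg (pow_nonneg hx.1 _)]
    exact pow_le_one₀ hx.1 hx.2
  have hmono : ∀ x y : ℝ, 0 ≤ x → x ≤ y → y ≤ 1 → φ x ≤ φ y := by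
    intro x y hx0 hxy hy1
    exact integral_mono (hint x ⟨hx0, hxy.trans hy1⟩) (hint y ⟨hx0.trans hxy, hy1⟩)
      (fun ω => pow_le_pow_left₀ hx0 hxy _)
  have hbddS : BddBelow {x : ℝ | x ∈ Set.Icc (0 : ℝ) 1 ∧ (∫ ω, x ^ N ω ∂P) = x} :=
    ⟨0, fun x hx => hx.1.1⟩
  rcases le_or_gt 1 (2 * p) with h2p | h2p
  · have h1 : (1 : ℝ) ∈ {x : ℝ | x ∈ Set.Icc (0 : ℝ) 1 ∧ (∫ ω, x ^ N ω ∂P) = x} := by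
      constructor
      · exact ⟨zero_le_one, le_rfl⟩
      · simp [measure_univ]
    exact (csInf_le hbddS h1).trans h2p
  · -- key inequality φ x ≤ p + (1-p) x^2 on [0,1]
    have hkey : ∀ x ∈ Set.Icc (0 : ℝ) 1, φ x ≤ p + (1 - p) * x ^ 2 := by
      intro x hx
      have hintx := hint x hx
      have hsplit : φ x = (∫ ω in {ω | N ω ≤ 1}, x ^ N ω ∂P)
          + ∫ ω in {ω | N ω ≤ 1}ᶜ, x ^ N ω ∂P :=
        (integral_add_compl hmeasA hintx).symm
      have hA : (∫ ω in {ω | N ω ≤ 1}, x ^ N ω ∂P) ≤ p := by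
        have : (∫ ω in {ω | N ω ≤ 1}, x ^ N ω ∂P) ≤ ∫ _ω in {ω | N ω ≤ 1}, (1 : ℝ) ∂P := by
          refine setIntegral_mono_on hintx.integrableOn (integrableOn_const ?_)
            hmeasA (fun ω _ => pow_le_one₀ hx.1 hx.2)
          exact measure_ne_top P _
        simpa [Measure.restrict_apply_univ, Measure.real_def] using this
      have hB : (∫ ω in {ω | N ω ≤ 1}ᶜ, x ^ N ω ∂P) ≤ (1 - p) * x ^ 2 := by
        have hb : (∫ ω in {ω | N ω ≤ 1}ᶜ, x ^ N ω ∂P)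
            ≤ ∫ _ω in {ω | N ω ≤ 1}ᶜ, x ^ 2 ∂P := by
          refine setIntegral_mono_on hintx.integrableOn
            (integrableOn_const (measure_lt_top P _).ne) hmeasA.compl ?_
          intro ω hω
          have h2 : 2 ≤ N ω := by
            simp only [Set.mem_compl_iff, Set.mem_setOf_eq, not_le] at hω
            omega
          exact pow_le_pow_of_le_one hx.1 hx.2 h2
        have hc : (P {ω | N ω ≤ 1}ᶜ).toReal = 1 - p := by
          rw [measure_compl hmeasA (measure_ne_top P _), measure_univ,
            ENNReal.toReal_sub_of_le prob_le_one ENNReal.one_ne_top, ENNReal.toReal_one]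
        calc (∫ ω in {ω | N ω ≤ 1}ᶜ, x ^ N ω ∂P) ≤ ∫ _ω in {ω | N ω ≤ 1}ᶜ, x ^ 2 ∂P := hb
          _ = (1 - p) * x ^ 2 := by rw [setIntegral_const, smul_eq_mul, Measure.real_def, hc]
      calc φ x = _ := hsplit
        _ ≤ p + (1 - p) * x ^ 2 := add_le_add hA hB
    have hφt : φ (2 * p) ≤ 2 * p := by
      have := hkey (2 * p) ⟨by positivity, h2p.le⟩
      nlinarith [sq_nonneg (2 * p - 1), hp0]
    set t : ℝ := 2 * p with htdef
    have ht0 : 0 ≤ t := by positivity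
    have ht1 : t ≤ 1 := h2p.le
    have hφ0 : 0 ≤ φ 0 := integral_nonneg (fun ω => pow_nonneg le_rfl _)
    set S' : Set ℝ := {x : ℝ | x ∈ Set.Icc (0 : ℝ) t ∧ x ≤ φ x} with hS'def
    have h0S : (0 : ℝ) ∈ S' := ⟨⟨le_rfl, ht0⟩, hφ0⟩
    have hbdd : BddAbove S' := ⟨t, fun x hx => hx.1.2⟩
    set c : ℝ := sSup S' with hcdef
    have hc_le_t : c ≤ t := csSup_le ⟨0, h0S⟩ (fun x hx => hx.1.2)
    have hc0 : 0 ≤ c := le_csSup hbdd h0S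
    have hc1 : c ≤ 1 := hc_le_t.trans ht1
    have hcφ : c ≤ φ c :=
      csSup_le ⟨0, h0S⟩ (fun x hx => hx.2.trans (hmono x c hx.1.1 (le_csSup hbdd hx) hc1))
    have hφc_le_t : φ c ≤ t := (hmono c t hc0 hc_le_t ht1).trans hφt
    have hφcS : φ c ∈ S' :=
      ⟨⟨hφ0.trans (hmono 0 c le_rfl hc0 hc1), hφc_le_t⟩,
        hmono c (φ c) hc0 hcφ (hφc_le_t.trans ht1)⟩
    have heq : φ c = c := le_antisymm (le_csSup hbdd hφcS) hcφ
    have hcmem : c ∈ {x : ℝ | x ∈ Set.Icc (0 : ℝ) 1 ∧ (∫ ω, x ^ N ω ∂P) = x} :=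
      ⟨⟨hc0, hc1⟩, heq⟩
    exact (csInf_le hbddS hcmem).trans hc_le_t
end

section
/- Let N be an ℕ-valued offspring random variable, n ≥ 2 an integer, and q = P(N < n). Assume q ≤ 2^{-n/(n-1)}. Let π_e be the extinction probability and let Z be the total progeny of the Galton-Watson tree with offspring law N, conditioned on extinction. Then for every integer k ≥ 1, P(Z ≥ k) ≤ (q^{1/n}/π_e)·(2 q^{1 - 1/n})^k. -/
set_option maxHeartbeats 1000000
set_option linter.unusedSectionVars false
set_option linter.unusedVariables false


open MeasureTheory ProbabilityTheory
open scoped ENNReal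

/-- Generation sizes of a Galton-Watson branching process driven by the
offspring variables `X n i`, started from a single individual. -/
def gwGen {Ω : Type*} (X : ℕ → ℕ → Ω → ℕ) : ℕ → Ω → ℕ
  | 0, _ => 1
  | n + 1, ω => ∑ i ∈ Finset.range (gwGen X n ω), X n i ω

/-- Total progeny of the Galton-Watson process. -/
noncomputable def gwProgeny {Ω : Type*} (X : ℕ → ℕ → Ω → ℕ) (ω : Ω) : ℝ≥0∞ :=
  ∑' m, (gwGen X m ω : ℝ≥0∞)

namespace GWAux

variable {Ω : Type*}

/-- Total population strictly before generation `m`. -/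
def Zm (X : ℕ → ℕ → Ω → ℕ) (m : ℕ) (ω : Ω) : ℕ := ∑ j ∈ Finset.range m, gwGen X j ω

lemma measurable_nat_elim {mΩ : MeasurableSpace Ω} {β : Type*} [MeasurableSpace β]
    {f : Ω → ℕ} (hf : Measurable f) {g : ℕ → Ω → β} (hg : ∀ i, Measurable (g i)) :
    Measurable (fun ω => g (f ω) ω) := by
  have h : Measurable (Function.uncurry (Function.swap g)) :=
    measurable_from_prod_countable_left fun i => hg i
  exact h.comp (measurable_id.prodMk hf)

/-- The σ-algebra generated by the variables with indices in `S`. -/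
def SA (X : ℕ → ℕ → Ω → ℕ) (S : Set (ℕ × ℕ)) : MeasurableSpace Ω :=
  ⨆ p ∈ S, MeasurableSpace.comap (X p.1 p.2) inferInstance

lemma measurable_X_SA (X : ℕ → ℕ → Ω → ℕ) {S : Set (ℕ × ℕ)} {p : ℕ × ℕ} (hp : p ∈ S) :
    Measurable[SA X S] (X p.1 p.2) := by
  rw [measurable_iff_comap_le]
  unfold SA
  exact le_biSup (fun p : ℕ × ℕ => MeasurableSpace.comap (X p.1 p.2) inferInstance) hp

lemma SA_mono (X : ℕ → ℕ → Ω → ℕ) {S T : Set (ℕ × ℕ)} (h : S ⊆ T) : SA X S ≤ SA X T := by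
  unfold SA
  exact biSup_mono h

lemma SA_le {mΩ : MeasurableSpace Ω} (X : ℕ → ℕ → Ω → ℕ)
    (hmeas : ∀ m i, Measurable (X m i)) (S : Set (ℕ × ℕ)) : SA X S ≤ mΩ := by
  refine iSup_le fun p => iSup_le fun _ => measurable_iff_comap_le.1 (hmeas p.1 p.2)

lemma measurable_gen_SA (X : ℕ → ℕ → Ω → ℕ) :
    ∀ m, Measurable[SA X {p | p.1 < m}] (gwGen X m)
  | 0 => measurable_const
  | (m + 1) => by
    have hf : Measurable[SA X {p | p.1 < m + 1}] (gwGen X m) :=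
      (measurable_gen_SA X m).mono (SA_mono X (fun p hp => Nat.lt_succ_of_lt hp)) le_rfl
    have hg : ∀ i, Measurable[SA X {p | p.1 < m + 1}]
        (fun ω => ∑ j ∈ Finset.range i, X m j ω) := by
      intro i
      exact Finset.measurable_sum _ fun j _ =>
        measurable_X_SA X (show ((m, j) : ℕ × ℕ) ∈ {p : ℕ × ℕ | p.1 < m + 1} from
          Nat.lt_succ_self m)
    exact measurable_nat_elim hf hg

lemma measurable_Zm_SA (X : ℕ → ℕ → Ω → ℕ) (m : ℕ) :
    Measurable[SA X {p | p.1 < m}] (Zm X m) := by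
  refine Finset.measurable_sum _ fun j hj => ?_
  have hjm : j < m := Finset.mem_range.1 hj
  exact (measurable_gen_SA X j).mono (SA_mono X (fun p hp => lt_trans hp hjm)) le_rfl

lemma measurable_gen {mΩ : MeasurableSpace Ω} (X : ℕ → ℕ → Ω → ℕ)
    (hmeas : ∀ m i, Measurable (X m i)) (m : ℕ) : Measurable (gwGen X m) :=
  (measurable_gen_SA X m).mono (SA_le X hmeas _) le_rfl

lemma measurable_Zm {mΩ : MeasurableSpace Ω} (X : ℕ → ℕ → Ω → ℕ)
    (hmeas : ∀ m i, Measurable (X m i)) (m : ℕ) : Measurable (Zm X m) :=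
  (measurable_Zm_SA X m).mono (SA_le X hmeas _) le_rfl

/-- Generating function of the offspring distribution. -/
noncomputable def phi {mΩ : MeasurableSpace Ω} (X : ℕ → ℕ → Ω → ℕ) (P : Measure Ω)
    (s : ℝ≥0∞) : ℝ≥0∞ :=
  ∫⁻ ω, s ^ X 0 0 ω ∂P

variable {mΩ : MeasurableSpace Ω} (P : Measure Ω) [IsProbabilityMeasure P]
variable (X : ℕ → ℕ → Ω → ℕ)

lemma phi_eq (hmeas : ∀ m i, Measurable (X m i))
    (hident : ∀ m i, Measure.map (X m i) P = Measure.map (X 0 0) P)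
    (s : ℝ≥0∞) (m i : ℕ) : ∫⁻ ω, s ^ X m i ω ∂P = phi X P s := by
  have h1 : ∫⁻ ω, s ^ X m i ω ∂P = ∫⁻ x, s ^ x ∂(Measure.map (X m i) P) :=
    (lintegral_map measurable_from_top (hmeas m i)).symm
  rw [h1, hident m i, lintegral_map measurable_from_top (hmeas 0 0)]
  rfl

lemma indep_SA (hmeas : ∀ m i, Measurable (X m i))
    (hindep : iIndepFun (fun p : ℕ × ℕ => X p.1 p.2) P)
    (S : Set (ℕ × ℕ)) : Indep (SA X S) (SA X Sᶜ) P := by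
  unfold SA
  exact indep_iSup_of_disjoint
    (m := fun p : ℕ × ℕ => MeasurableSpace.comap (X p.1 p.2) inferInstance)
    (fun p => measurable_iff_comap_le.1 (hmeas p.1 p.2))
    hindep.iIndep disjoint_compl_right

lemma lintegral_mul_SA (hmeas : ∀ m i, Measurable (X m i))
    (hindep : iIndepFun (fun p : ℕ × ℕ => X p.1 p.2) P)
    {S : Set (ℕ × ℕ)} {f g : Ω → ℝ≥0∞} (hf : Measurable[SA X S] f)
    (hg : Measurable[SA X Sᶜ] g) :
    ∫⁻ ω, f ω * g ω ∂P = (∫⁻ ω, f ω ∂P) * ∫⁻ ω, g ω ∂P :=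
  lintegral_mul_eq_lintegral_mul_lintegral_of_independent_measurableSpace
    (SA_le X hmeas S) (SA_le X hmeas Sᶜ) (indep_SA P X hmeas hindep S) hf hg

lemma lintegral_pow_sum (hmeas : ∀ m i, Measurable (X m i))
    (hindep : iIndepFun (fun p : ℕ × ℕ => X p.1 p.2) P)
    (hident : ∀ m i, Measure.map (X m i) P = Measure.map (X 0 0) P)
    (s : ℝ≥0∞) (m : ℕ) : ∀ g : ℕ,
    ∫⁻ ω, s ^ (∑ i ∈ Finset.range g, X m i ω) ∂P = (phi X P s) ^ g := by
  intro g
  induction g with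
  | zero => simp
  | succ g ih =>
    have hpt : (fun ω => s ^ (∑ i ∈ Finset.range (g + 1), X m i ω))
        = fun ω => (s ^ (∑ i ∈ Finset.range g, X m i ω)) * s ^ X m g ω := by
      funext ω; rw [Finset.sum_range_succ, pow_add]
    have hA : Measurable[SA X {p : ℕ × ℕ | p.1 = m ∧ p.2 < g}]
        (fun ω => s ^ (∑ i ∈ Finset.range g, X m i ω)) := by
      refine measurable_from_top.comp ?_
      exact Finset.measurable_sum _ fun j hj =>
        measurable_X_SA X (show ((m, j) : ℕ × ℕ) ∈ {p : ℕ × ℕ | p.1 = m ∧ p.2 < g} from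
          ⟨rfl, Finset.mem_range.1 hj⟩)
    have hB : Measurable[SA X {p : ℕ × ℕ | p.1 = m ∧ p.2 < g}ᶜ]
        (fun ω => s ^ X m g ω) := by
      refine measurable_from_top.comp ?_
      exact measurable_X_SA X (show ((m, g) : ℕ × ℕ) ∈ {p : ℕ × ℕ | p.1 = m ∧ p.2 < g}ᶜ from
        fun h => absurd h.2 (lt_irrefl g))
    calc ∫⁻ ω, s ^ (∑ i ∈ Finset.range (g + 1), X m i ω) ∂P
        = ∫⁻ ω, (s ^ (∑ i ∈ Finset.range g, X m i ω)) * s ^ X m g ω ∂P := by rw [hpt]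
      _ = (∫⁻ ω, s ^ (∑ i ∈ Finset.range g, X m i ω) ∂P) * ∫⁻ ω, s ^ X m g ω ∂P :=
          lintegral_mul_SA P X hmeas hindep hA hB
      _ = (phi X P s) ^ g * phi X P s := by rw [ih, phi_eq P X hmeas hident]
      _ = (phi X P s) ^ (g + 1) := (pow_succ _ _).symm

/-- Partition a lintegral according to the (countable) value of `G`. -/
lemma lintegral_split {G : Ω → ℕ} (hG : Measurable G) {f : Ω → ℝ≥0∞} (hf : Measurable f)
    {k : ℕ → Ω → ℝ≥0∞} (hk : ∀ g, Measurable (k g)) :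
    ∫⁻ ω, f ω * k (G ω) ω ∂P
      = ∑' g, ∫⁻ ω, Set.indicator {ω | G ω = g} f ω * k g ω ∂P := by
  have hmeasset : ∀ g : ℕ, MeasurableSet {ω | G ω = g} := fun g =>
    hG (measurableSet_singleton g)
  rw [← lintegral_tsum (f := fun g ω => Set.indicator {ω | G ω = g} f ω * k g ω) (fun g => ((hf.indicator (hmeasset g)).mul (hk g)).aemeasurable)]
  refine lintegral_congr fun ω => ?_
  rw [tsum_eq_single (G ω)]
  · rw [Set.indicator_of_mem (show ω ∈ {ω' | G ω' = G ω} from rfl)]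
  · intro g hg
    rw [Set.indicator_of_notMem (show ω ∉ {ω' | G ω' = g} from fun hc => hg (Eq.symm hc)),
      zero_mul]

/-- The key induction: the weighted generating function of the truncated process
stays below `c`. -/
lemma key (hmeas : ∀ m i, Measurable (X m i))
    (hindep : iIndepFun (fun p : ℕ × ℕ => X p.1 p.2) P)
    (hident : ∀ m i, Measure.map (X m i) P = Measure.map (X 0 0) P)
    (r c : ℝ≥0∞) (hinv : ∀ s, s ≤ c → r * phi X P s ≤ c) :
    ∀ m, ∀ s, s ≤ c → ∫⁻ ω, r ^ Zm X m ω * s ^ gwGen X m ω ∂P ≤ c := by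
  intro m
  induction m with
  | zero =>
    intro s hs
    have h1 : (fun ω => r ^ Zm X 0 ω * s ^ gwGen X 0 ω) = fun _ => s := by
      funext ω; simp [Zm, gwGen]
    rw [h1, lintegral_const, measure_univ, mul_one]
    exact hs
  | succ m ih =>
    intro s hs
    have ht : r * phi X P s ≤ c := hinv s hs
    set t := r * phi X P s with htdef
    set G := gwGen X m with hGdef
    set f : Ω → ℝ≥0∞ := fun ω => r ^ Zm X m ω with hfdef
    have hGm : Measurable G := measurable_gen X hmeas m
    have hfm : Measurable f := measurable_from_top.comp (measurable_Zm X hmeas m)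
    set k : ℕ → Ω → ℝ≥0∞ := fun g ω => r ^ g * s ^ (∑ i ∈ Finset.range g, X m i ω)
      with hkdef
    have hkm : ∀ g, Measurable (k g) := fun g =>
      (measurable_from_top.comp
        (Finset.measurable_sum _ fun j _ => hmeas m j)).const_mul _
    set k' : ℕ → Ω → ℝ≥0∞ := fun g _ => t ^ g with hk'def
    have hk'm : ∀ g, Measurable (k' g) := fun g => measurable_const
    have hpt : (fun ω => r ^ Zm X (m + 1) ω * s ^ gwGen X (m + 1) ω)
        = fun ω => f ω * k (G ω) ω := by
      funext ω
      have hZ : Zm X (m + 1) ω = Zm X m ω + gwGen X m ω := Finset.sum_range_succ _ _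
      have hGen : gwGen X (m + 1) ω = ∑ i ∈ Finset.range (gwGen X m ω), X m i ω := rfl
      rw [hZ, hGen, pow_add]
      simp only [hfdef, hkdef, hGdef]
      ring
    have hterm : ∀ g : ℕ,
        ∫⁻ ω, Set.indicator {ω | G ω = g} f ω * k g ω ∂P
          = ∫⁻ ω, Set.indicator {ω | G ω = g} f ω * k' g ω ∂P := by
      intro g
      have hA : Measurable[SA X {p : ℕ × ℕ | p.1 < m}]
          (Set.indicator {ω | G ω = g} f) := by
        refine Measurable.indicator ?_ ?_
        · exact measurable_from_top.comp (measurable_Zm_SA X m)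
        · exact (show MeasurableSet[SA X {p : ℕ × ℕ | p.1 < m}] {ω | G ω = g} from
            (measurable_gen_SA X m) (measurableSet_singleton g))
      have hB : Measurable[SA X {p : ℕ × ℕ | p.1 < m}ᶜ] (k g) := by
        refine Measurable.const_mul ?_ _
        refine measurable_from_top.comp ?_
        exact Finset.measurable_sum _ fun j _ =>
          measurable_X_SA X (show ((m, j) : ℕ × ℕ) ∈ {p : ℕ × ℕ | p.1 < m}ᶜ from
            fun h => absurd h (lt_irrefl m))
      have hindA : Measurable (Set.indicator {ω | G ω = g} f) :=
        hfm.indicator (show MeasurableSet {ω | G ω = g} from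
          hGm (measurableSet_singleton g))
      calc ∫⁻ ω, Set.indicator {ω | G ω = g} f ω * k g ω ∂P
          = (∫⁻ ω, Set.indicator {ω | G ω = g} f ω ∂P) * ∫⁻ ω, k g ω ∂P :=
            lintegral_mul_SA P X hmeas hindep hA hB
        _ = (∫⁻ ω, Set.indicator {ω | G ω = g} f ω ∂P) * t ^ g := by
            have hkint : ∫⁻ ω, k g ω ∂P = t ^ g := by
              have : ∫⁻ ω, k g ω ∂P
                  = r ^ g * ∫⁻ ω, s ^ (∑ i ∈ Finset.range g, X m i ω) ∂P :=
                lintegral_const_mul _ (measurable_from_top.comp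
                  (Finset.measurable_sum _ fun j _ => hmeas m j))
              rw [this, lintegral_pow_sum P X hmeas hindep hident s m g, htdef, mul_pow]
            rw [hkint]
        _ = ∫⁻ ω, Set.indicator {ω | G ω = g} f ω * k' g ω ∂P := by
            rw [lintegral_mul_const _ hindA]
    calc ∫⁻ ω, r ^ Zm X (m + 1) ω * s ^ gwGen X (m + 1) ω ∂P
        = ∫⁻ ω, f ω * k (G ω) ω ∂P := by rw [hpt]
      _ = ∑' g, ∫⁻ ω, Set.indicator {ω | G ω = g} f ω * k g ω ∂P :=
          lintegral_split P hGm hfm hkm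
      _ = ∑' g, ∫⁻ ω, Set.indicator {ω | G ω = g} f ω * k' g ω ∂P := tsum_congr hterm
      _ = ∫⁻ ω, f ω * k' (G ω) ω ∂P := (lintegral_split P hGm hfm hk'm).symm
      _ = ∫⁻ ω, r ^ Zm X m ω * t ^ gwGen X m ω ∂P := rfl
      _ ≤ c := ih t ht

/-- Chernoff-type bound on the truncated events. -/
lemma chernoff (hmeas : ∀ m i, Measurable (X m i))
    (hindep : iIndepFun (fun p : ℕ × ℕ => X p.1 p.2) P)
    (hident : ∀ m i, Measure.map (X m i) P = Measure.map (X 0 0) P)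
    (r c : ℝ≥0∞) (hr : 1 ≤ r) (hinv : ∀ s, s ≤ c → r * phi X P s ≤ c) (kk m : ℕ) :
    P ({ω | gwGen X m ω = 0} ∩ {ω | kk ≤ Zm X m ω}) * r ^ kk ≤ c := by
  have hkey : ∫⁻ ω, r ^ Zm X m ω * (0 : ℝ≥0∞) ^ gwGen X m ω ∂P ≤ c :=
    key P X hmeas hindep hident r c hinv m 0 zero_le
  set E := {ω | gwGen X m ω = 0} ∩ {ω | kk ≤ Zm X m ω} with hEdef
  have hEm : MeasurableSet E := by
    refine MeasurableSet.inter ?_ ?_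
    · exact (show MeasurableSet {ω | gwGen X m ω = 0} from
        (measurable_gen X hmeas m) (measurableSet_singleton 0))
    · exact measurableSet_le measurable_const (measurable_Zm X hmeas m)
  have hpt : ∀ ω, Set.indicator E (fun _ => r ^ kk) ω
      ≤ r ^ Zm X m ω * (0 : ℝ≥0∞) ^ gwGen X m ω := by
    intro ω
    by_cases hω : ω ∈ E
    · rw [Set.indicator_of_mem hω]
      have h1 : gwGen X m ω = 0 := hω.1
      have h2 : kk ≤ Zm X m ω := hω.2
      rw [h1, pow_zero, mul_one]
      exact pow_le_pow_right₀ hr h2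
    · rw [Set.indicator_of_notMem hω]; exact zero_le
  calc P E * r ^ kk = r ^ kk * P E := mul_comm _ _
    _ = ∫⁻ ω, Set.indicator E (fun _ => r ^ kk) ω ∂P :=
        (lintegral_indicator_const hEm _).symm
    _ ≤ ∫⁻ ω, r ^ Zm X m ω * (0 : ℝ≥0∞) ^ gwGen X m ω ∂P := lintegral_mono hpt
    _ ≤ c := hkey

lemma gen_stable (ω : Ω) {m : ℕ} (h : gwGen X m ω = 0) :
    ∀ j, m ≤ j → gwGen X j ω = 0 := by
  intro j hj
  obtain ⟨d, rfl⟩ := Nat.exists_eq_add_of_le hj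
  clear hj
  induction d with
  | zero => exact h
  | succ d ih =>
    have h1 : gwGen X (m + d + 1) ω
        = ∑ i ∈ Finset.range (gwGen X (m + d) ω), X (m + d) i ω := rfl
    rw [show m + (d + 1) = m + d + 1 from rfl, h1, ih, Finset.range_zero, Finset.sum_empty]

/-- On the extinction event, the progeny is captured at the level where the
generation dies out. -/
lemma event_subset (kk : ℕ) :
    ({ω | (kk : ℝ≥0∞) ≤ gwProgeny X ω} ∩ {ω | gwProgeny X ω < ⊤})
      ⊆ ⋃ m, ({ω | gwGen X m ω = 0} ∩ {ω | kk ≤ Zm X m ω}) := by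
  rintro ω ⟨hkmem, hfinmem⟩
  have hkk : (kk : ℝ≥0∞) ≤ gwProgeny X ω := hkmem
  have hfin : gwProgeny X ω < ⊤ := hfinmem
  have hex : ∃ m, gwGen X m ω = 0 := by
    by_contra h
    push_neg at h
    have hone : ∀ m, (1 : ℝ≥0∞) ≤ (gwGen X m ω : ℝ≥0∞) := by
      intro m
      exact_mod_cast Nat.one_le_iff_ne_zero.2 (h m)
    have htop : (⊤ : ℝ≥0∞) ≤ gwProgeny X ω := by
      calc (⊤ : ℝ≥0∞) = ∑' _ : ℕ, (1 : ℝ≥0∞) :=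
          (ENNReal.tsum_const_eq_top_of_ne_zero one_ne_zero).symm
        _ ≤ ∑' m, (gwGen X m ω : ℝ≥0∞) := ENNReal.tsum_le_tsum hone
        _ = gwProgeny X ω := rfl
    exact absurd (lt_of_le_of_lt htop hfin) (lt_irrefl ⊤)
  obtain ⟨m, hm⟩ := hex
  refine Set.mem_iUnion.2 ⟨m, hm, ?_⟩
  have hprog : gwProgeny X ω = (Zm X m ω : ℝ≥0∞) := by
    have h1 : ∑' j, (gwGen X j ω : ℝ≥0∞) = ∑ j ∈ Finset.range m, (gwGen X j ω : ℝ≥0∞) := by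
      refine tsum_eq_sum fun j hj => ?_
      have hjm : m ≤ j := le_of_not_gt (fun hc => hj (Finset.mem_range.2 hc))
      rw [gen_stable X ω hm j hjm, Nat.cast_zero]
    rw [gwProgeny, h1, Zm, Nat.cast_sum]
  rw [hprog] at hkk
  exact_mod_cast hkk

/-- The master bound, in `ℝ≥0∞`. -/
lemma master (hmeas : ∀ m i, Measurable (X m i))
    (hindep : iIndepFun (fun p : ℕ × ℕ => X p.1 p.2) P)
    (hident : ∀ m i, Measure.map (X m i) P = Measure.map (X 0 0) P)
    (c b : ℝ≥0∞) (hb0 : b ≠ 0) (hbtop : b ≠ ⊤) (hb1 : b ≤ 1)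
    (hinv : ∀ s, s ≤ c → b⁻¹ * phi X P s ≤ c) (kk : ℕ) :
    P ({ω | (kk : ℝ≥0∞) ≤ gwProgeny X ω} ∩ {ω | gwProgeny X ω < ⊤}) ≤ c * b ^ kk := by
  set r := b⁻¹ with hrdef
  have hr : 1 ≤ r := ENNReal.one_le_inv.2 hb1
  set E : ℕ → Set Ω := fun m => {ω | gwGen X m ω = 0} ∩ {ω | kk ≤ Zm X m ω} with hEdef
  have hmono : Monotone E := by
    intro m m' hmm' ω hω
    have h0 : gwGen X m' ω = 0 := gen_stable X ω hω.1 m' hmm'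
    have h2 : Zm X m ω ≤ Zm X m' ω := by
      unfold Zm
      exact Finset.sum_le_sum_of_subset (Finset.range_subset_range.2 hmm')
    exact ⟨h0, le_trans hω.2 h2⟩
  have hEb : ∀ m, P (E m) ≤ c * b ^ kk := by
    intro m
    have h1 : P (E m) * r ^ kk ≤ c := chernoff P X hmeas hindep hident r c hr hinv kk m
    have h2 : P (E m) * r ^ kk * b ^ kk ≤ c * b ^ kk := mul_le_mul_left h1 _
    have h3 : r ^ kk * b ^ kk = 1 := by
      rw [← mul_pow, hrdef, ENNReal.inv_mul_cancel hb0 hbtop, one_pow]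
    rwa [mul_assoc, h3, mul_one] at h2
  calc P ({ω | (kk : ℝ≥0∞) ≤ gwProgeny X ω} ∩ {ω | gwProgeny X ω < ⊤})
      ≤ P (⋃ m, E m) := measure_mono (event_subset X kk)
    _ = ⨆ m, P (E m) := Directed.measure_iUnion (Monotone.directed_le hmono)
    _ ≤ c * b ^ kk := iSup_le hEb

/-- The generating function bound `φ(s) ≤ P(N < n) + s ^ n` for `s ≤ 1`. -/
lemma phi_le (hmeas : ∀ m i, Measurable (X m i)) (n : ℕ) {s : ℝ≥0∞} (hs1 : s ≤ 1) :
    phi X P s ≤ P {ω | X 0 0 ω < n} + s ^ n := by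
  have hpt : ∀ ω, s ^ X 0 0 ω
      ≤ Set.indicator {ω | X 0 0 ω < n} (fun _ => (1 : ℝ≥0∞)) ω + s ^ n := by
    intro ω
    by_cases hω : X 0 0 ω < n
    · rw [Set.indicator_of_mem (show ω ∈ {ω | X 0 0 ω < n} from hω)]
      calc s ^ X 0 0 ω ≤ 1 ^ X 0 0 ω := pow_le_pow_left' hs1 _
        _ = 1 := one_pow _
        _ ≤ 1 + s ^ n := le_self_add
    · rw [Set.indicator_of_notMem (show ω ∉ {ω | X 0 0 ω < n} from hω), zero_add]
      exact pow_le_pow_of_le_one zero_le hs1 (le_of_not_gt hω)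
  have hEm : MeasurableSet {ω | X 0 0 ω < n} :=
    (hmeas 0 0) (measurableSet_lt measurable_id measurable_const)
  calc phi X P s
      ≤ ∫⁻ ω, Set.indicator {ω | X 0 0 ω < n} (fun _ => (1 : ℝ≥0∞)) ω + s ^ n ∂P :=
        lintegral_mono hpt
    _ = P {ω | X 0 0 ω < n} + s ^ n := by
        rw [lintegral_add_right _ measurable_const, lintegral_indicator_const hEm,
          lintegral_const, measure_univ, one_mul, mul_one]

end GWAux

theorem stmt8 {Ω : Type*} [MeasurableSpace Ω] (P : Measure Ω) [IsProbabilityMeasure P]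
    (X : ℕ → ℕ → Ω → ℕ) (hmeas : ∀ m i, Measurable (X m i))
    (hindep : iIndepFun (fun p : ℕ × ℕ => X p.1 p.2) P)
    (hident : ∀ m i, Measure.map (X m i) P = Measure.map (X 0 0) P)
    (n : ℕ) (hn : 2 ≤ n)
    (q : ℝ) (hqdef : q = (P {ω | X 0 0 ω < n}).toReal)
    (hq : q ≤ 2 ^ (-(n : ℝ) / ((n : ℝ) - 1)))
    (πe : ℝ) (hπe : πe = (P {ω | gwProgeny X ω < ⊤}).toReal) (hπpos : 0 < πe)
    (k : ℕ) (hk : 1 ≤ k) :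
    (P ({ω | (k : ℝ≥0∞) ≤ gwProgeny X ω} ∩ {ω | gwProgeny X ω < ⊤})).toReal / πe
      ≤ (q ^ (1 / (n : ℝ)) / πe) * (2 * q ^ (1 - 1 / (n : ℝ))) ^ k := by
  classical
  have hq0 : 0 ≤ q := hqdef ▸ ENNReal.toReal_nonneg
  have hn2 : (2 : ℝ) ≤ (n : ℝ) := by exact_mod_cast hn
  have hn0 : (n : ℝ) ≠ 0 := by positivity
  have hn1 : (0 : ℝ) < (n : ℝ) - 1 := by linarith
  have hq' : P {ω | X 0 0 ω < n} = ENNReal.ofReal q := by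
    rw [hqdef, ENNReal.ofReal_toReal (measure_ne_top P _)]
  have hexp_nonneg : 0 ≤ 1 - 1 / (n : ℝ) := by
    have h1 : 1 / (n : ℝ) ≤ 1 := by
      rw [div_le_one (by linarith)]; linarith
    linarith
  have hb1R : 2 * q ^ (1 - 1 / (n : ℝ)) ≤ 1 := by
    have h1 : q ^ (1 - 1 / (n : ℝ)) ≤ (2 ^ (-(n : ℝ) / ((n : ℝ) - 1))) ^ (1 - 1 / (n : ℝ)) :=
      Real.rpow_le_rpow hq0 hq hexp_nonneg
    have h2 : ((2 : ℝ) ^ (-(n : ℝ) / ((n : ℝ) - 1))) ^ (1 - 1 / (n : ℝ))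
        = 2 ^ ((-(n : ℝ) / ((n : ℝ) - 1)) * (1 - 1 / (n : ℝ))) := by
      rw [← Real.rpow_mul (by norm_num : (0 : ℝ) ≤ 2)]
    have h3 : (-(n : ℝ) / ((n : ℝ) - 1)) * (1 - 1 / (n : ℝ)) = -1 := by
      field_simp
    have h4 : ((2 : ℝ) ^ (-1 : ℝ)) = 1 / 2 := by
      rw [Real.rpow_neg_one]; norm_num
    have h5 : q ^ (1 - 1 / (n : ℝ)) ≤ 1 / 2 := by
      rw [h2, h3, h4] at h1; exact h1
    linarith
  have hc1R : q ^ (1 / (n : ℝ)) ≤ 1 := by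
    have hqle1 : q ≤ 1 := by
      have h1 : (2 : ℝ) ^ (-(n : ℝ) / ((n : ℝ) - 1)) ≤ 1 := by
        apply Real.rpow_le_one_of_one_le_of_nonpos one_le_two
        apply div_nonpos_of_nonpos_of_nonneg
        · simp
        · linarith
      linarith
    exact Real.rpow_le_one hq0 hqle1 (by positivity)
  have hmain : P ({ω | (k : ℝ≥0∞) ≤ gwProgeny X ω} ∩ {ω | gwProgeny X ω < ⊤})
      ≤ ENNReal.ofReal (q ^ (1 / (n : ℝ)))
        * (ENNReal.ofReal (2 * q ^ (1 - 1 / (n : ℝ)))) ^ k := by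
    rcases eq_or_lt_of_le hq0 with hq0' | hqpos
    · -- q = 0 : extinction has probability zero
      have hq0'' : q = 0 := hq0'.symm
      have hinv : ∀ s, s ≤ (0 : ℝ≥0∞) → (1 : ℝ≥0∞)⁻¹ * GWAux.phi X P s ≤ 0 := by
        intro s hs
        rw [le_zero_iff] at hs
        subst hs
        rw [inv_one, one_mul]
        have h1 := GWAux.phi_le P X hmeas n (s := 0) zero_le_one
        rw [hq', hq0''] at h1
        simpa [zero_pow (by omega : n ≠ 0)] using h1
      have h0 : P ({ω | (k : ℝ≥0∞) ≤ gwProgeny X ω} ∩ {ω | gwProgeny X ω < ⊤}) ≤ 0 := by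
        have h1 := GWAux.master P X hmeas hindep hident 0 1 one_ne_zero ENNReal.one_ne_top
          le_rfl hinv k
        simpa using h1
      exact le_trans h0 zero_le
    · -- q > 0
      set c := ENNReal.ofReal (q ^ (1 / (n : ℝ))) with hcdef
      set b := ENNReal.ofReal (2 * q ^ (1 - 1 / (n : ℝ))) with hbdef
      have hb0 : b ≠ 0 := by
        rw [hbdef, Ne, ENNReal.ofReal_eq_zero, not_le]
        positivity
      have hbtop : b ≠ ⊤ := ENNReal.ofReal_ne_top
      have hb1 : b ≤ 1 := by
        rw [hbdef, ← ENNReal.ofReal_one]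
        exact ENNReal.ofReal_le_ofReal hb1R
      have hcn : c ^ n = ENNReal.ofReal q := by
        rw [hcdef, ← ENNReal.ofReal_pow (by positivity)]
        congr 1
        rw [← Real.rpow_natCast (q ^ (1 / (n : ℝ))) n, ← Real.rpow_mul hq0]
        rw [show (1 / (n : ℝ)) * (n : ℕ) = 1 by field_simp]
        exact Real.rpow_one q
      have hbc : b * c = ENNReal.ofReal q + ENNReal.ofReal q := by
        rw [hbdef, hcdef, ← ENNReal.ofReal_mul (by positivity)]
        rw [show 2 * q ^ (1 - 1 / (n : ℝ)) * q ^ (1 / (n : ℝ))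
            = 2 * (q ^ (1 - 1 / (n : ℝ)) * q ^ (1 / (n : ℝ))) by ring]
        rw [← Real.rpow_add hqpos]
        rw [show (1 - 1 / (n : ℝ)) + 1 / (n : ℝ) = 1 by ring, Real.rpow_one]
        rw [two_mul, ENNReal.ofReal_add hq0 hq0]
      have hc1 : c ≤ 1 := by
        rw [hcdef, ← ENNReal.ofReal_one]
        exact ENNReal.ofReal_le_ofReal hc1R
      have hinv : ∀ s, s ≤ c → b⁻¹ * GWAux.phi X P s ≤ c := by
        intro s hs
        have hphile : GWAux.phi X P s ≤ b * c := by
          calc GWAux.phi X P s ≤ P {ω | X 0 0 ω < n} + s ^ n :=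
              GWAux.phi_le P X hmeas n (le_trans hs hc1)
            _ ≤ ENNReal.ofReal q + c ^ n := by
                rw [hq']
                exact add_le_add_right (pow_le_pow_left' hs n) _
            _ = b * c := by rw [hcn, hbc]
        calc b⁻¹ * GWAux.phi X P s ≤ b⁻¹ * (b * c) := mul_le_mul_right hphile _
          _ = (b⁻¹ * b) * c := (mul_assoc _ _ _).symm
          _ = c := by rw [ENNReal.inv_mul_cancel hb0 hbtop, one_mul]
      exact GWAux.master P X hmeas hindep hident c b hb0 hbtop hb1 hinv k
  have hfin : (P ({ω | (k : ℝ≥0∞) ≤ gwProgeny X ω} ∩ {ω | gwProgeny X ω < ⊤})).toReal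
      ≤ q ^ (1 / (n : ℝ)) * (2 * q ^ (1 - 1 / (n : ℝ))) ^ k := by
    apply ENNReal.toReal_le_of_le_ofReal (by positivity)
    rw [ENNReal.ofReal_mul (by positivity), ENNReal.ofReal_pow (by positivity)]
    exact hmain
  rw [div_mul_eq_mul_div]
  exact (div_le_div_iff_of_pos_right hπpos).2 hfin
end
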